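/- For n ≥ 2 and the Choi map Φ(A) = (n-1)·Tr(A)·I_n − A on M_n(ℂ), the full Choi matrix [Φ(e_{ij})]_{i,j=1}^{n} is not positive semi-definite; hence Φ is not completely positive. -/

import Mathlib

open Matrix ComplexOrder

/-- The Choi map `A ↦ (n-1)·Tr(A)·I − A` on `M_n(ℂ)`. -/
noncomputable def choiMap (n : ℕ) (A : Matrix (Fin n) (Fin n) ℂ) :
    Matrix (Fin n) (Fin n) ℂ :=
  (((n : ℂ) - 1) * A.trace) • (1 : Matrix (Fin n) (Fin n) ℂ) - A

/-- The full Choi matrix `[Φ(e_{ij})]_{i,j=1}^{n}` of the Choi map. -/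
noncomputable def choiMapChoiMatrix (n : ℕ) :
    Matrix (Fin n × Fin n) (Fin n × Fin n) ℂ :=
  fun p q => choiMap n (Matrix.single p.1 q.1 1) p.2 q.2

theorem choiMap_not_completely_positive (n : ℕ) (hn : 2 ≤ n) :
    ¬ (choiMapChoiMatrix n).PosSemidef := by
  intro h
  set v : Fin n × Fin n → ℂ := fun p => if p.1 = p.2 then 1 else 0 with hv
  have h2 := h.dotProduct_mulVec_nonneg v
  have hval : star v ⬝ᵥ (choiMapChoiMatrix n *ᵥ v) = -n := by
    simp only [dotProduct, mulVec, choiMapChoiMatrix, choiMap, hv, Pi.star_apply,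
      Matrix.sub_apply, Matrix.smul_apply, Matrix.one_apply, smul_eq_mul]
    rw [Fintype.sum_prod_type]
    simp [Fintype.sum_prod_type, Matrix.trace, Matrix.diag, Matrix.single,
      Finset.sum_ite_eq, apply_ite (starRingEnd ℂ), Finset.mul_sum, Finset.sum_sub_distrib,
      mul_ite, ite_and]
  rw [hval] at h2
  have hre : (0:ℝ) ≤ ((-n : ℂ)).re := h2.1
  simp at hre
  have : 0 < n := by omega
  have hpos : (0:ℝ) < n := by exact_mod_cast this
  linarith
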